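/- arXiv:1312.4607 — 3 statements merged into one kernel-verified Lean document; each statement's English description precedes it below -/
import Mathlib

section
/- For every real number X ≥ √2 and every A ∈ SL(2, ℝ), the Frobenius norm bound ‖A‖_F ≤ X holds if and only if the hyperbolic distance from i to A·i is at most arcosh(X²/2). -/
open Matrix

/-- Inverse hyperbolic cosine: `arcosh x = log (x + √(x² − 1))`,
the inverse of `cosh` on `[1, ∞)`. -/
noncomputable def arcosh (x : ℝ) : ℝ :=
  Real.log (x + Real.sqrt (x ^ 2 - 1))

/-- Möbius action of a 2×2 real matrix on a point of the complex plane. -/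
noncomputable def moebius (A : Matrix (Fin 2) (Fin 2) ℝ) (z : ℂ) : ℂ :=
  ((A 0 0 : ℂ) * z + (A 0 1 : ℂ)) / ((A 1 0 : ℂ) * z + (A 1 1 : ℂ))

/-- Hyperbolic distance on the upper half-plane:
`d(z, w) = arcosh (1 + |z − w|² / (2 Im z Im w))`. -/
noncomputable def hypDist (z w : ℂ) : ℝ :=
  arcosh (1 + ‖z - w‖ ^ 2 / (2 * z.im * w.im))

/-- Frobenius norm of a 2×2 real matrix. -/
noncomputable def frobNorm (A : Matrix (Fin 2) (Fin 2) ℝ) : ℝ :=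
  Real.sqrt ((A 0 0) ^ 2 + (A 0 1) ^ 2 + (A 1 0) ^ 2 + (A 1 1) ^ 2)

lemma arcosh_lt_arcosh {x y : ℝ} (hx : 1 ≤ x) (hxy : x < y) :
    arcosh x < arcosh y := by
  have h1 : Real.sqrt (x ^ 2 - 1) ≤ Real.sqrt (y ^ 2 - 1) := by
    apply Real.sqrt_le_sqrt; nlinarith
  have h0 : 0 ≤ Real.sqrt (x ^ 2 - 1) := Real.sqrt_nonneg _
  exact Real.log_lt_log (by linarith) (by linarith)

lemma arcosh_le_arcosh_iff {x y : ℝ} (hx : 1 ≤ x) (hy : 1 ≤ y) :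
    arcosh x ≤ arcosh y ↔ x ≤ y := by
  constructor
  · intro h
    by_contra h'
    push_neg at h'
    exact absurd h (not_le.mpr (arcosh_lt_arcosh hy h'))
  · intro h
    rcases eq_or_lt_of_le h with rfl | h
    · exact le_refl _
    · exact (arcosh_lt_arcosh hx h).le

/-- For `X ≥ √2` and `A ∈ SL(2, ℝ)`: `‖A‖_F ≤ X` iff the hyperbolic distance from
`i` to `A·i` is at most `arcosh(X²/2)`. -/
theorem frobNorm_le_iff_hypDist_le (X : ℝ) (hX : Real.sqrt 2 ≤ X)
    (A : Matrix.SpecialLinearGroup (Fin 2) ℝ) :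
    frobNorm A.1 ≤ X ↔
      hypDist Complex.I (moebius A.1 Complex.I) ≤ arcosh (X ^ 2 / 2) := by
  have hA := A.2
  rw [Matrix.det_fin_two] at hA
  set a := A.1 0 0 with ha; set b := A.1 0 1 with hb
  set c := A.1 1 0 with hc; set d := A.1 1 1 with hd
  have hcd : c ^ 2 + d ^ 2 ≠ 0 := by
    intro h
    have hc0 : c = 0 := by nlinarith [sq_nonneg c, sq_nonneg d]
    have hd0 : d = 0 := by nlinarith [sq_nonneg c, sq_nonneg d]
    rw [hc0, hd0] at hA; simp at hA
  have hcd' : 0 < c ^ 2 + d ^ 2 :=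
    lt_of_le_of_ne (by positivity) (Ne.symm hcd)
  have hS : 2 ≤ a ^ 2 + b ^ 2 + c ^ 2 + d ^ 2 := by
    nlinarith [sq_nonneg (a - d), sq_nonneg (b + c)]
  have hX0 : 0 < X := lt_of_lt_of_le (Real.sqrt_pos.mpr (by norm_num)) hX
  have hX2 : 2 ≤ X ^ 2 := by
    nlinarith [Real.sq_sqrt (by norm_num : (0:ℝ) ≤ 2), Real.sqrt_nonneg 2]
  have him : (moebius A.1 Complex.I).im = 1 / (c ^ 2 + d ^ 2) := by
    simp only [moebius, Complex.div_im, Complex.add_im, Complex.add_re, Complex.mul_im,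
      Complex.mul_re, Complex.I_re, Complex.I_im, Complex.ofReal_re, Complex.ofReal_im,
      Complex.normSq_apply]
    rw [← ha, ← hb, ← hc, ← hd]
    have h' : (d:ℝ) * d + c * c ≠ 0 := by
      intro h; exact hcd (by linarith [sq_nonneg c, sq_nonneg d, h, (by ring : (c:ℝ)^2 + d^2 = d*d + c*c)])
    norm_num
    rw [div_sub_div_same, hA, show ((d:ℝ) * d + c * c) = c ^ 2 + d ^ 2 from by ring, one_div]
  have hre : (moebius A.1 Complex.I).re = (a * c + b * d) / (c ^ 2 + d ^ 2) := by
    simp only [moebius, Complex.div_re, Complex.add_im, Complex.add_re, Complex.mul_im,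
      Complex.mul_re, Complex.I_re, Complex.I_im, Complex.ofReal_re, Complex.ofReal_im,
      Complex.normSq_apply]
    rw [← ha, ← hb, ← hc, ← hd]
    have h' : (d:ℝ) * d + c * c ≠ 0 := by
      intro h; exact hcd (by linarith [sq_nonneg c, sq_nonneg d, h, (by ring : (c:ℝ)^2 + d^2 = d*d + c*c)])
    norm_num
    rw [← add_div, div_eq_div_iff h' hcd]
    ring
  have key : 1 + ‖Complex.I - moebius A.1 Complex.I‖ ^ 2 /
      (2 * Complex.I.im * (moebius A.1 Complex.I).im) =
      (a ^ 2 + b ^ 2 + c ^ 2 + d ^ 2) / 2 := by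
    rw [Complex.sq_norm, Complex.normSq_apply, Complex.sub_re, Complex.sub_im, him, hre,
      Complex.I_re, Complex.I_im]
    field_simp
    linear_combination (-(1 + a*d - b*c)) * hA
  rw [hypDist, key, frobNorm]
  rw [show X = Real.sqrt (X ^ 2) from (Real.sqrt_sq hX0.le).symm]
  rw [Real.sqrt_le_sqrt_iff (by positivity),
    arcosh_le_arcosh_iff (by linarith)
      (by rw [Real.sq_sqrt (by positivity : (0:ℝ) ≤ X ^ 2)]; linarith),
    Real.sq_sqrt (by positivity : (0:ℝ) ≤ X ^ 2)]
  constructor <;> intro h <;> linarith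
end

section
/- For every n ≥ 1, the number of integer lattice points in the Euclidean ball of radius X in ℝⁿ is asymptotic to vol(Bⁿ)·Xⁿ as X → ∞; that is, #{v ∈ ℤⁿ : ‖v‖₂ ≤ X} / Xⁿ → vol(Bⁿ), where vol(Bⁿ) is the Lebesgue volume of the unit Euclidean ball in ℝⁿ. -/
open MeasureTheory Filter Metric
open scoped ENNReal

noncomputable section LatticeCount

/-- The half-open unit cube based at the integer point `v`. -/
abbrev latticeCube (n : ℕ) (v : Fin n → ℤ) : Set (Fin n → ℝ) :=
  Set.univ.pi fun i => Set.Ico ((v i : ℝ)) (v i + 1)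

lemma latticeCube_volume (n : ℕ) (v : Fin n → ℤ) : volume (latticeCube n v) = 1 := by
  rw [Real.volume_pi_Ico]; simp

lemma latticeCube_disjoint (n : ℕ) {v w : Fin n → ℤ} (h : v ≠ w) :
    Disjoint (latticeCube n v) (latticeCube n w) := by
  rw [Set.disjoint_left]
  intro x hxv hxw
  apply h
  funext i
  have h1 := hxv i (Set.mem_univ i)
  have h2 := hxw i (Set.mem_univ i)
  have e1 : ⌊x i⌋ = v i := Int.floor_eq_iff.mpr ⟨h1.1, h1.2⟩
  have e2 : ⌊x i⌋ = w i := Int.floor_eq_iff.mpr ⟨h2.1, h2.2⟩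
  rw [← e1, e2]

lemma latticeCube_measurable (n : ℕ) (v : Fin n → ℤ) : MeasurableSet (latticeCube n v) :=
  MeasurableSet.univ_pi fun _ => measurableSet_Ico

lemma union_latticeCubes_volume (n : ℕ) {s : Set (Fin n → ℤ)} (hs : s.Finite) :
    volume (⋃ v ∈ s, latticeCube n v) = (Nat.card s : ℝ≥0∞) := by
  classical
  rw [show (⋃ v ∈ s, latticeCube n v) = ⋃ v ∈ hs.toFinset, latticeCube n v by simp]
  rw [measure_biUnion_finset (fun v _ w _ hvw => latticeCube_disjoint n hvw)
    (fun v _ => latticeCube_measurable n v)]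
  simp only [latticeCube_volume, Finset.sum_const, nsmul_eq_mul, mul_one]
  rw [Nat.card_coe_set_eq, Set.ncard_eq_toFinset_card _ hs]

lemma finite_latticeBall (n : ℕ) (X : ℝ) (hX : 0 ≤ X) :
    {v : Fin n → ℤ | Real.sqrt (∑ i, ((v i : ℝ)) ^ 2) ≤ X}.Finite := by
  have : {v : Fin n → ℤ | Real.sqrt (∑ i, ((v i : ℝ)) ^ 2) ≤ X} ⊆
      Set.univ.pi fun _ => Set.Icc (⌈-X⌉) (⌊X⌋) := by
    intro v hv i _
    have hnn : (0:ℝ) ≤ ∑ j, ((v j : ℝ)) ^ 2 :=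
      Finset.sum_nonneg fun j _ => sq_nonneg _
    have hsum : ∑ j, ((v j : ℝ)) ^ 2 ≤ X ^ 2 := by
      have h := Set.mem_setOf_eq ▸ hv
      nlinarith [Real.sq_sqrt hnn, Real.sqrt_nonneg (∑ j, ((v j : ℝ)) ^ 2)]
    have h1 : ((v i : ℝ)) ^ 2 ≤ X ^ 2 :=
      le_trans (Finset.single_le_sum (fun j _ => sq_nonneg ((v j : ℝ))) (Finset.mem_univ i)) hsum
    have h2 := abs_le_of_sq_le_sq' h1 hX
    exact ⟨Int.ceil_le.mpr (by simpa using h2.1), Int.le_floor.mpr h2.2⟩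
  exact (Set.Finite.pi fun _ => Set.finite_Icc _ _).subset this

lemma euclid_triangle (n : ℕ) (a b : Fin n → ℝ) :
    Real.sqrt (∑ i, a i ^ 2) ≤ Real.sqrt (∑ i, b i ^ 2) + Real.sqrt (∑ i, (a i - b i) ^ 2) := by
  let A : EuclideanSpace ℝ (Fin n) := WithLp.toLp 2 a
  let B : EuclideanSpace ℝ (Fin n) := WithLp.toLp 2 b
  have h : ‖A‖ ≤ ‖B‖ + ‖A - B‖ := by
    calc ‖A‖ = ‖B + (A - B)‖ := by rw [add_sub_cancel]
    _ ≤ ‖B‖ + ‖A - B‖ := norm_add_le _ _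
  simpa [A, B, EuclideanSpace.norm_eq, PiLp.sub_apply, sq_abs] using h

lemma latticeCube_dist (n : ℕ) {x : Fin n → ℝ} {v : Fin n → ℤ} (hx : x ∈ latticeCube n v) :
    Real.sqrt (∑ i, (x i - (v i : ℝ)) ^ 2) ≤ Real.sqrt n := by
  apply Real.sqrt_le_sqrt
  calc ∑ i, (x i - (v i : ℝ)) ^ 2 ≤ ∑ _i : Fin n, (1:ℝ) := by
        apply Finset.sum_le_sum
        intro i _
        have h := hx i (Set.mem_univ i)
        have h1 : 0 ≤ x i - (v i : ℝ) := by linarith [h.1]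
        have h2 : x i - (v i : ℝ) ≤ 1 := by linarith [h.2]
        nlinarith
    _ = n := by simp

lemma lower_incl (n : ℕ) (X : ℝ) :
    {x : Fin n → ℝ | Real.sqrt (∑ i, x i ^ 2) ≤ X - Real.sqrt n} ⊆
      ⋃ v ∈ {v : Fin n → ℤ | Real.sqrt (∑ i, ((v i : ℝ)) ^ 2) ≤ X}, latticeCube n v := by
  intro x hx
  have hmem : (fun i => ⌊x i⌋) ∈ {v : Fin n → ℤ | Real.sqrt (∑ i, ((v i : ℝ)) ^ 2) ≤ X} := by
    have ht := euclid_triangle n (fun i => (⌊x i⌋ : ℝ)) x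
    have hd : Real.sqrt (∑ i, ((⌊x i⌋ : ℝ) - x i) ^ 2) ≤ Real.sqrt n := by
      rw [show (fun i => ((⌊x i⌋ : ℝ) - x i) ^ 2) = fun i => (x i - (⌊x i⌋ : ℝ)) ^ 2 from
        funext fun i => by ring]
      exact latticeCube_dist n (fun i _ => ⟨Int.floor_le _, Int.lt_floor_add_one _⟩)
    have := Set.mem_setOf_eq ▸ hx
    simp only [Set.mem_setOf_eq]
    calc Real.sqrt (∑ i, ((⌊x i⌋ : ℝ)) ^ 2)
        ≤ Real.sqrt (∑ i, x i ^ 2) + Real.sqrt (∑ i, ((⌊x i⌋ : ℝ) - x i) ^ 2) := ht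
      _ ≤ (X - Real.sqrt n) + Real.sqrt n := add_le_add this hd
      _ = X := by ring
  exact Set.mem_biUnion hmem (fun i _ => ⟨Int.floor_le _, Int.lt_floor_add_one _⟩)

lemma upper_incl (n : ℕ) (X : ℝ) :
    (⋃ v ∈ {v : Fin n → ℤ | Real.sqrt (∑ i, ((v i : ℝ)) ^ 2) ≤ X}, latticeCube n v) ⊆
      {x : Fin n → ℝ | Real.sqrt (∑ i, x i ^ 2) ≤ X + Real.sqrt n} := by
  intro x hx
  obtain ⟨v, hv, hxv⟩ := Set.mem_iUnion₂.mp hx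
  have ht := euclid_triangle n x (fun i => (v i : ℝ))
  have hd := latticeCube_dist n hxv
  simp only [Set.mem_setOf_eq] at hv ⊢
  calc Real.sqrt (∑ i, x i ^ 2)
      ≤ Real.sqrt (∑ i, ((v i : ℝ)) ^ 2) + Real.sqrt (∑ i, (x i - (v i : ℝ)) ^ 2) := ht
    _ ≤ X + Real.sqrt n := add_le_add hv hd

lemma vol_transfer (n : ℕ) (r : ℝ) :
    volume (closedBall (0 : EuclideanSpace ℝ (Fin n)) r)
      = volume {x : Fin n → ℝ | Real.sqrt (∑ i, x i ^ 2) ≤ r} := by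
  rw [← ((EuclideanSpace.volume_preserving_symm_measurableEquiv_toLp (Fin n))).measure_preimage]
  · congr 1
    ext x
    simp only [Set.mem_preimage, Set.mem_setOf_eq, mem_closedBall_zero_iff,
      EuclideanSpace.norm_eq, Real.norm_eq_abs, sq_abs]
    rfl
  · exact (measurableSet_le (by fun_prop) measurable_const).nullMeasurableSet

lemma sandwich (n : ℕ) (X : ℝ) (hX : Real.sqrt n ≤ X) :
    volume (closedBall (0 : EuclideanSpace ℝ (Fin n)) (X - Real.sqrt n)) ≤
      (Nat.card {v : Fin n → ℤ | Real.sqrt (∑ i, ((v i : ℝ)) ^ 2) ≤ X} : ℝ≥0∞) ∧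
    (Nat.card {v : Fin n → ℤ | Real.sqrt (∑ i, ((v i : ℝ)) ^ 2) ≤ X} : ℝ≥0∞) ≤
      volume (closedBall (0 : EuclideanSpace ℝ (Fin n)) (X + Real.sqrt n)) := by
  have hX0 : 0 ≤ X := le_trans (Real.sqrt_nonneg _) hX
  have hfin := finite_latticeBall n X hX0
  rw [vol_transfer, vol_transfer, ← union_latticeCubes_volume n hfin]
  exact ⟨measure_mono (lower_incl n X), measure_mono (upper_incl n X)⟩

end LatticeCount

/-- The number of integer lattice points in the Euclidean ball of radius `X` in `ℝⁿ` is
asymptotic to `vol(Bⁿ)·Xⁿ` as `X → ∞`: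
`#{v ∈ ℤⁿ : ‖v‖₂ ≤ X} / Xⁿ → vol(Bⁿ)`. -/
theorem lattice_points_in_ball_asymptotic (n : ℕ) (hn : 1 ≤ n) :
    Tendsto
      (fun X : ℝ =>
        (Nat.card {v : Fin n → ℤ | Real.sqrt (∑ i, ((v i : ℝ)) ^ 2) ≤ X} : ℝ) / X ^ n)
      atTop
      (nhds ((volume (Metric.closedBall (0 : EuclideanSpace ℝ (Fin n)) 1)).toReal)) := by
  set c : ℝ := (volume (Metric.closedBall (0 : EuclideanSpace ℝ (Fin n)) 1)).toReal with hc
  set N : ℝ → ℝ := fun X =>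
    (Nat.card {v : Fin n → ℤ | Real.sqrt (∑ i, ((v i : ℝ)) ^ 2) ≤ X} : ℝ) with hN
  have hvol_fin : volume (Metric.closedBall (0 : EuclideanSpace ℝ (Fin n)) 1) ≠ ⊤ :=
    (measure_closedBall_lt_top).ne
  have hball : ∀ r : ℝ, 0 ≤ r →
      volume (Metric.closedBall (0 : EuclideanSpace ℝ (Fin n)) r)
        = ENNReal.ofReal (r ^ n) * volume (Metric.closedBall (0 : EuclideanSpace ℝ (Fin n)) 1) := by
    intro r hr
    rw [Measure.addHaar_closedBall' _ _ hr, finrank_euclideanSpace_fin]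
  have key : ∀ X : ℝ, Real.sqrt n ≤ X →
      c * (X - Real.sqrt n) ^ n ≤ N X ∧ N X ≤ c * (X + Real.sqrt n) ^ n := by
    intro X hX
    obtain ⟨h1, h2⟩ := sandwich n X hX
    have hX0 : 0 ≤ X := le_trans (Real.sqrt_nonneg _) hX
    rw [hball _ (sub_nonneg.mpr hX)] at h1
    rw [hball _ (by positivity)] at h2
    constructor
    · have := ENNReal.toReal_le_toReal
        (ENNReal.mul_ne_top ENNReal.ofReal_ne_top hvol_fin) (ENNReal.natCast_ne_top _) |>.mpr h1
      rw [ENNReal.toReal_mul, ENNReal.toReal_ofReal (pow_nonneg (sub_nonneg.mpr hX) n),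
        ENNReal.toReal_natCast] at this
      rw [mul_comm]
      exact this
    · have := ENNReal.toReal_le_toReal (ENNReal.natCast_ne_top _)
        (ENNReal.mul_ne_top ENNReal.ofReal_ne_top hvol_fin) |>.mpr h2
      rw [ENNReal.toReal_mul, ENNReal.toReal_ofReal (by positivity), ENNReal.toReal_natCast] at this
      rw [mul_comm]
      exact this
  have hl : Tendsto (fun X : ℝ => c * ((X - Real.sqrt n) / X) ^ n) atTop (nhds c) := by
    have h1 : Tendsto (fun X : ℝ => (X - Real.sqrt n) / X) atTop (nhds 1) := by
      have h2 : Tendsto (fun X : ℝ => 1 - Real.sqrt n / X) atTop (nhds (1 - 0)) :=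
        tendsto_const_nhds.sub (tendsto_const_nhds.div_atTop tendsto_id)
      rw [sub_zero] at h2
      refine h2.congr' ?_
      filter_upwards [eventually_ne_atTop (0:ℝ)] with X hX
      field_simp
    have h3 := (tendsto_const_nhds (x := c)).mul (h1.pow n)
    simpa using h3
  have hu : Tendsto (fun X : ℝ => c * ((X + Real.sqrt n) / X) ^ n) atTop (nhds c) := by
    have h1 : Tendsto (fun X : ℝ => (X + Real.sqrt n) / X) atTop (nhds 1) := by
      have h2 : Tendsto (fun X : ℝ => 1 + Real.sqrt n / X) atTop (nhds (1 + 0)) :=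
        tendsto_const_nhds.add (tendsto_const_nhds.div_atTop tendsto_id)
      rw [add_zero] at h2
      refine h2.congr' ?_
      filter_upwards [eventually_ne_atTop (0:ℝ)] with X hX
      field_simp
    have h3 := (tendsto_const_nhds (x := c)).mul (h1.pow n)
    simpa using h3
  refine tendsto_of_tendsto_of_tendsto_of_le_of_le' hl hu ?_ ?_
  · filter_upwards [eventually_ge_atTop (Real.sqrt n), eventually_gt_atTop (0:ℝ)] with X h1 h2
    have hk := (key X h1).1
    calc c * ((X - Real.sqrt n) / X) ^ n = c * (X - Real.sqrt n) ^ n / X ^ n := by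
          rw [div_pow, mul_div_assoc]
      _ ≤ N X / X ^ n := by gcongr
  · filter_upwards [eventually_ge_atTop (Real.sqrt n), eventually_gt_atTop (0:ℝ)] with X h1 h2
    have hk := (key X h1).2
    calc N X / X ^ n ≤ c * (X + Real.sqrt n) ^ n / X ^ n := by gcongr
      _ = c * ((X + Real.sqrt n) / X) ^ n := by rw [div_pow, mul_div_assoc]
end

section
/- The rational numbers in [0, 1] with denominator at most Q equidistribute as Q → ∞: letting F_Q = {p/q : 0 ≤ p ≤ q ≤ Q, gcd(p, q) = 1} be the set of Farey fractions of order Q, for every continuous function f : [0, 1] → ℝ one has (1/|F_Q|) · Σ_{r ∈ F_Q} f(r) → ∫₀¹ f(x) dx as Q → ∞. -/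
open Filter Finset Topology ArithmeticFunction intervalIntegral
open scoped ArithmeticFunction.Moebius


lemma mob_sum (n : ℕ) :
    (∑ d ∈ n.divisors, (μ d : ℝ)) = if n = 1 then 1 else 0 := by
  have h := congrArg (fun g : ArithmeticFunction ℤ => g n) moebius_mul_coe_zeta
  simp only [coe_mul_zeta_apply, one_apply] at h
  exact_mod_cast h

lemma swap_sum (G : ℕ → ℕ → ℝ) (Q : ℕ) :
    ∑ q ∈ Icc 1 Q, ∑ d ∈ q.divisors, G d (q / d)
      = ∑ k ∈ Icc 1 Q, ∑ d ∈ Icc 1 (Q / k), G d k := by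
  rw [Finset.sum_sigma', Finset.sum_sigma']
  apply Finset.sum_nbij' (fun x => ⟨x.1 / x.2, x.2⟩) (fun x => ⟨x.2 * x.1, x.2⟩)
  · rintro ⟨q, d⟩ h
    simp only [Finset.mem_sigma, Finset.mem_Icc, Nat.mem_divisors] at h ⊢
    obtain ⟨⟨hq1, hqQ⟩, hdq, hq0⟩ := h
    have hd0 : 0 < d := Nat.pos_of_dvd_of_pos hdq (Nat.pos_of_ne_zero hq0)
    have hk1 : 1 ≤ q / d := Nat.one_le_div_iff hd0 |>.2 (Nat.le_of_dvd (Nat.pos_of_ne_zero hq0) hdq)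
    refine ⟨⟨hk1, le_trans (Nat.div_le_self _ _) hqQ⟩, hd0, ?_⟩
    rw [Nat.le_div_iff_mul_le (lt_of_lt_of_le Nat.zero_lt_one hk1)]
    rw [Nat.mul_div_cancel' hdq] at *
    · exact hqQ
  · rintro ⟨k, d⟩ h
    simp only [Finset.mem_sigma, Finset.mem_Icc, Nat.mem_divisors] at h ⊢
    obtain ⟨⟨hk1, hkQ⟩, hd1, hdQk⟩ := h
    have hk0 : 0 < k := hk1
    refine ⟨⟨Nat.one_le_iff_ne_zero.2 ?_, ?_⟩, Dvd.intro k rfl, ?_⟩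
    · positivity
    · exact (Nat.le_div_iff_mul_le hk0).1 hdQk
    · positivity
  · rintro ⟨q, d⟩ h
    simp only [Finset.mem_sigma, Finset.mem_Icc, Nat.mem_divisors] at h
    obtain ⟨⟨hq1, hqQ⟩, hdq, hq0⟩ := h
    simp [Nat.mul_div_cancel' hdq]
  · rintro ⟨k, d⟩ h
    simp only [Finset.mem_sigma, Finset.mem_Icc, Nat.mem_divisors] at h
    obtain ⟨⟨hk1, hkQ⟩, hd1, hdQk⟩ := h
    simp [Nat.mul_div_cancel_left _ (by omega : 0 < d)]
  · rintro ⟨q, d⟩ h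
    rfl

lemma inner_eq (f : ℝ → ℝ) {q : ℕ} (hq : 1 ≤ q) :
    (∑ p ∈ range (q + 1), if Nat.gcd p q = 1 then f ((p : ℝ) / (q : ℝ)) else 0)
      = ∑ d ∈ q.divisors, (μ d : ℝ) *
          ∑ m ∈ range (q / d + 1), f ((m : ℝ) / ((q / d : ℕ) : ℝ)) := by
  have hq0 : q ≠ 0 := by omega
  have step1 : ∀ p ∈ range (q + 1),
      (if Nat.gcd p q = 1 then f ((p : ℝ) / (q : ℝ)) else 0)
        = ∑ d ∈ q.divisors, if d ∣ p then (μ d : ℝ) * f ((p : ℝ) / (q : ℝ)) else 0 := by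
    intro p _
    have hgcd : (Nat.gcd p q).divisors = q.divisors.filter (fun d => d ∣ p) := by
      ext d
      simp only [Nat.mem_divisors, Finset.mem_filter]
      constructor
      · rintro ⟨hd, -⟩
        exact ⟨⟨hd.trans (Nat.gcd_dvd_right _ _), hq0⟩, hd.trans (Nat.gcd_dvd_left _ _)⟩
      · rintro ⟨⟨hdq, -⟩, hdp⟩
        exact ⟨Nat.dvd_gcd hdp hdq, Nat.gcd_ne_zero_right hq0⟩
    calc (if Nat.gcd p q = 1 then f ((p : ℝ) / (q : ℝ)) else 0)
        = (∑ d ∈ (Nat.gcd p q).divisors, (μ d : ℝ)) * f ((p : ℝ) / (q : ℝ)) := by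
          rw [mob_sum]; split_ifs <;> simp
      _ = ∑ d ∈ q.divisors.filter (fun d => d ∣ p), (μ d : ℝ) * f ((p : ℝ) / (q : ℝ)) := by
          rw [hgcd, Finset.sum_mul]
      _ = _ := by rw [Finset.sum_filter]
  rw [Finset.sum_congr rfl step1, Finset.sum_comm]
  refine Finset.sum_congr rfl fun d hd => ?_
  rw [Nat.mem_divisors] at hd
  obtain ⟨hdq, -⟩ := hd
  have hd0 : 0 < d := Nat.pos_of_dvd_of_pos hdq (by omega)
  rw [← Finset.sum_filter, Finset.mul_sum]
  apply Finset.sum_nbij' (fun p => p / d) (fun m => m * d)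
  · intro p hp
    simp only [Finset.mem_filter, Finset.mem_range] at hp ⊢
    exact Nat.lt_succ_of_le (Nat.div_le_div_right (Nat.lt_succ_iff.1 hp.1))
  · intro m hm
    simp only [Finset.mem_filter, Finset.mem_range] at hm ⊢
    exact ⟨Nat.lt_succ_of_le ((Nat.le_div_iff_mul_le hd0).1 (Nat.lt_succ_iff.1 hm)),
      dvd_mul_left d m⟩
  · intro p hp
    simp only [Finset.mem_filter] at hp
    exact Nat.div_mul_cancel hp.2
  · intro m hm
    exact Nat.mul_div_cancel m hd0
  · intro p hp
    simp only [Finset.mem_filter] at hp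
    congr 1
    obtain ⟨a, ha⟩ := hp.2
    obtain ⟨b, hb⟩ := hdq
    subst ha hb
    rw [Nat.mul_div_cancel_left a hd0, Nat.mul_div_cancel_left b hd0]
    push_cast
    rw [mul_comm (d:ℝ) a, mul_comm (d:ℝ) b, mul_div_mul_right _ _ (by exact_mod_cast hd0.ne')]

lemma riemann_step (f : ℝ → ℝ) (hf : ContinuousOn f (Set.Icc 0 1)) {k : ℕ} (hk : 1 ≤ k)
    {c : ℝ} (hc : 0 ≤ c)
    (h : ∀ x ∈ Set.Icc (0:ℝ) 1, ∀ y ∈ Set.Icc (0:ℝ) 1, |x - y| ≤ 1 / k → |f x - f y| ≤ c) :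
    |(∑ m ∈ range (k + 1), f ((m : ℝ) / k)) / k - ∫ x in (0:ℝ)..1, f x|
      ≤ |f 0| / k + c := by
  have hk0 : (0:ℝ) < k := by exact_mod_cast hk
  set a : ℕ → ℝ := fun m => (m : ℝ) / k with ha
  have hmono : ∀ m : ℕ, a m ≤ a (m + 1) := by
    intro m
    simp only [ha]
    gcongr
    push_cast; linarith
  have hsub : ∀ m : ℕ, m < k → Set.uIcc (a m) (a (m + 1)) ⊆ Set.Icc 0 1 := by
    intro m hm
    rw [Set.uIcc_of_le (hmono m)]
    apply Set.Icc_subset_Icc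
    · positivity
    · rw [div_le_one hk0]; exact_mod_cast hm
  have hint : ∀ m : ℕ, m < k → IntervalIntegrable f MeasureTheory.volume (a m) (a (m + 1)) :=
    fun m hm => (hf.mono (hsub m hm)).intervalIntegrable
  have hI : (∫ x in (0:ℝ)..1, f x) = ∑ m ∈ range k, ∫ x in a m..a (m + 1), f x := by
    rw [intervalIntegral.sum_integral_adjacent_intervals hint]
    simp only [ha]
    norm_num
    rw [div_self hk0.ne']
  have hgap : ∀ m : ℕ, a (m + 1) - a m = 1 / k := by
    intro m; simp only [ha]; push_cast; field_simp; ring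
  have hS : (∑ m ∈ range (k + 1), f ((m : ℝ) / k))
      = f 0 + ∑ m ∈ range k, f (a (m + 1)) := by
    rw [Finset.sum_range_succ']
    simp only [ha, Nat.cast_zero, zero_div, Nat.cast_add, Nat.cast_one]
    ring
  have key : ∀ m : ℕ, m < k →
      |f (a (m + 1)) / k - ∫ x in a m..a (m + 1), f x| ≤ c / k := by
    intro m hm
    have hconst : f (a (m + 1)) / k = ∫ _x in a m..a (m + 1), f (a (m + 1)) := by
      rw [intervalIntegral.integral_const, hgap m, smul_eq_mul]
      ring
    rw [hconst, ← intervalIntegral.integral_sub intervalIntegrable_const (hint m hm)]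
    have hb : ∀ x ∈ Set.uIoc (a m) (a (m + 1)),
        ‖f (a (m + 1)) - f x‖ ≤ c := by
      intro x hx
      rw [Set.uIoc_of_le (hmono m)] at hx
      have hxI : x ∈ Set.Icc (0:ℝ) 1 :=
        hsub m hm (by rw [Set.uIcc_of_le (hmono m)]; exact ⟨hx.1.le, hx.2⟩)
      have haI : a (m + 1) ∈ Set.Icc (0:ℝ) 1 :=
        hsub m hm (by rw [Set.uIcc_of_le (hmono m)]; exact ⟨hmono m, le_refl _⟩)
      have hd : |a (m + 1) - x| ≤ 1 / k := by
        rw [abs_of_nonneg (by linarith [hx.2])]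
        have := hgap m
        linarith [hx.1]
      exact h _ haI _ hxI hd
    have := intervalIntegral.norm_integral_le_of_norm_le_const hb
    rw [hgap m] at this
    calc |∫ x in a m..a (m+1), (f (a (m+1)) - f x)| ≤ c * |1 / (k:ℝ)| := this
      _ = c / k := by rw [abs_of_pos (by positivity)]; ring
  calc |(∑ m ∈ range (k + 1), f ((m : ℝ) / k)) / k - ∫ x in (0:ℝ)..1, f x|
      = |f 0 / k + ∑ m ∈ range k, (f (a (m + 1)) / k - ∫ x in a m..a (m + 1), f x)| := by
        rw [hS, hI, add_div, Finset.sum_div, Finset.sum_sub_distrib]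
        rw [div_eq_mul_inv, add_sub_assoc]
    _ ≤ |f 0 / k| + |∑ m ∈ range k, (f (a (m + 1)) / k - ∫ x in a m..a (m + 1), f x)| :=
        abs_add_le _ _
    _ ≤ |f 0| / k + ∑ m ∈ range k, |f (a (m + 1)) / k - ∫ x in a m..a (m + 1), f x| := by
        gcongr
        · rw [abs_div, abs_of_pos hk0]
        · exact Finset.abs_sum_le_sum_abs _ _
    _ ≤ |f 0| / k + ∑ _m ∈ range k, c / k := by
        gcongr with m hm
        exact key m (Finset.mem_range.1 hm)
    _ = |f 0| / k + c := by
        rw [Finset.sum_const, Finset.card_range, nsmul_eq_mul]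
        field_simp

lemma riemann_tendsto (f : ℝ → ℝ) (hf : ContinuousOn f (Set.Icc 0 1)) :
    Tendsto (fun k : ℕ => (∑ m ∈ range (k + 1), f ((m : ℝ) / k)) / k) atTop
      (𝓝 (∫ x in (0:ℝ)..1, f x)) := by
  rw [Metric.tendsto_atTop]
  intro ε hε
  have hu : UniformContinuousOn f (Set.Icc 0 1) :=
    isCompact_Icc.uniformContinuousOn_of_continuous hf
  rw [Metric.uniformContinuousOn_iff] at hu
  obtain ⟨δ, hδ0, hδ⟩ := hu (ε / 4) (by linarith)
  obtain ⟨N1, hN1⟩ := exists_nat_gt (1 / δ)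
  obtain ⟨N2, hN2⟩ := exists_nat_gt (4 * |f 0| / ε)
  refine ⟨max N1 N2 + 1, fun k hk => ?_⟩
  have hk1 : 1 ≤ k := le_trans (by omega) hk
  have hk0 : (0:ℝ) < k := by exact_mod_cast hk1
  have hkN1 : (N1:ℝ) < k := by
    have : N1 < k := by omega
    exact_mod_cast this
  have hkN2 : (N2:ℝ) < k := by
    have : N2 < k := by omega
    exact_mod_cast this
  have hinv : 1 / (k:ℝ) < δ := by
    rw [div_lt_iff₀ hδ0] at hN1
    rw [div_lt_iff₀ hk0]
    nlinarith
  have hcond : ∀ x ∈ Set.Icc (0:ℝ) 1, ∀ y ∈ Set.Icc (0:ℝ) 1,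
      |x - y| ≤ 1 / k → |f x - f y| ≤ ε / 4 := by
    intro x hx y hy hxy
    have := hδ x hx y hy (by rw [Real.dist_eq]; exact lt_of_le_of_lt hxy hinv)
    rw [Real.dist_eq] at this
    exact this.le
  have hmain := riemann_step f hf hk1 (by linarith : (0:ℝ) ≤ ε / 4) hcond
  have h2 : |f 0| / k < ε / 4 := by
    rw [div_lt_iff₀ hε] at hN2
    rw [div_lt_iff₀ hk0]
    nlinarith [abs_nonneg (f 0)]
  rw [Real.dist_eq]
  calc |(∑ m ∈ range (k + 1), f ((m : ℝ) / k)) / k - ∫ x in (0:ℝ)..1, f x|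
      ≤ |f 0| / k + ε / 4 := hmain
    _ < ε := by linarith

noncomputable def Tm (f : ℝ → ℝ) (k : ℕ) : ℝ := ∑ m ∈ range (k + 1), f ((m : ℝ) / k)

noncomputable def Sm (f : ℝ → ℝ) (Q : ℕ) : ℝ :=
  ∑ q ∈ Icc 1 Q, ∑ p ∈ range (q + 1), if Nat.gcd p q = 1 then f ((p : ℝ) / (q : ℝ)) else 0

lemma Sm_eq (f : ℝ → ℝ) (Q : ℕ) :
    Sm f Q = ∑ k ∈ Icc 1 Q, (∑ d ∈ Icc 1 (Q / k), (μ d : ℝ)) * Tm f k := by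
  calc Sm f Q
      = ∑ q ∈ Icc 1 Q, ∑ d ∈ q.divisors, (fun d k => (μ d : ℝ) * Tm f k) d (q / d) := by
        refine Finset.sum_congr rfl fun q hq => ?_
        rw [inner_eq f (Finset.mem_Icc.1 hq).1]
        rfl
    _ = ∑ k ∈ Icc 1 Q, ∑ d ∈ Icc 1 (Q / k), (fun d k => (μ d : ℝ) * Tm f k) d k :=
        swap_sum (fun d k => (μ d : ℝ) * Tm f k) Q
    _ = ∑ k ∈ Icc 1 Q, (∑ d ∈ Icc 1 (Q / k), (μ d : ℝ)) * Tm f k := by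
        refine Finset.sum_congr rfl fun k _ => ?_
        rw [Finset.sum_mul]

lemma Sm_eq' (f : ℝ → ℝ) (Q : ℕ) :
    Sm f Q = ∑ d ∈ Icc 1 Q, (μ d : ℝ) * ∑ k ∈ Icc 1 (Q / d), Tm f k := by
  have sym : ∀ q ∈ Icc 1 Q,
      (∑ d ∈ q.divisors, (μ d : ℝ) * Tm f (q / d))
        = ∑ d ∈ q.divisors, (μ (q / d) : ℝ) * Tm f d := by
    intro q hq
    rw [← Nat.sum_div_divisors q (fun d => (μ (q / d) : ℝ) * Tm f d)]
    refine Finset.sum_congr rfl fun d hd => ?_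
    rw [Nat.mem_divisors] at hd
    rw [Nat.div_div_self hd.1 hd.2]
  calc Sm f Q
      = ∑ q ∈ Icc 1 Q, ∑ d ∈ q.divisors, (fun d k => (μ k : ℝ) * Tm f d) d (q / d) := by
        refine Finset.sum_congr rfl fun q hq => ?_
        rw [inner_eq f (Finset.mem_Icc.1 hq).1]
        exact sym q hq
    _ = ∑ k ∈ Icc 1 Q, ∑ d ∈ Icc 1 (Q / k), (fun d k => (μ k : ℝ) * Tm f d) d k :=
        swap_sum (fun d k => (μ k : ℝ) * Tm f d) Q
    _ = ∑ d ∈ Icc 1 Q, (μ d : ℝ) * ∑ k ∈ Icc 1 (Q / d), Tm f k := by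
        refine Finset.sum_congr rfl fun k _ => ?_
        rw [Finset.mul_sum]

lemma M_abs (n : ℕ) : |∑ d ∈ Icc 1 n, (μ d : ℝ)| ≤ n := by
  calc |∑ d ∈ Icc 1 n, (μ d : ℝ)| ≤ ∑ d ∈ Icc 1 n, |(μ d : ℝ)| :=
        Finset.abs_sum_le_sum_abs _ _
    _ ≤ ∑ _d ∈ Icc 1 n, 1 := by
        refine Finset.sum_le_sum fun d _ => ?_
        rcases moebius_eq_or d with h | h | h <;> simp [h]
    _ = n := by simp [Nat.card_Icc]

lemma sq_sum (Q : ℕ) : ∑ d ∈ Icc 2 Q, (1 : ℝ) / (d : ℝ) ^ 2 ≤ 3 / 4 := by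
  rcases lt_or_ge Q 2 with h | h
  · rw [Finset.Icc_eq_empty (by omega)]; norm_num
  · have key : ∀ n : ℕ, 2 ≤ n → ∑ d ∈ Icc 2 n, (1 : ℝ) / (d : ℝ) ^ 2 ≤ 3 / 4 - 1 / n := by
      intro n hn
      induction n, hn using Nat.le_induction with
      | base => norm_num
      | succ n hn ih =>
        rw [Finset.sum_Icc_succ_top (by omega : 2 ≤ n + 1)]
        have h1 : (0:ℝ) < n := by exact_mod_cast (by omega : 0 < n)
        have h2 : (0:ℝ) < (n:ℝ) + 1 := by linarith
        have step : (1 : ℝ) / ((n + 1 : ℕ) : ℝ) ^ 2 ≤ 1 / n - 1 / ((n:ℝ) + 1) := by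
          push_cast
          rw [div_sub_div _ _ h1.ne' h2.ne', div_le_div_iff₀ (by positivity) (by positivity)]
          ring_nf
          nlinarith
        have := ih
        push_cast
        push_cast at step this
        linarith
    calc ∑ d ∈ Icc 2 Q, (1 : ℝ) / (d : ℝ) ^ 2 ≤ 3 / 4 - 1 / Q := key Q h
      _ ≤ 3 / 4 := by
        have : (0:ℝ) < Q := by exact_mod_cast (by omega : 0 < Q)
        have : (0:ℝ) ≤ 1 / Q := by positivity
        linarith

lemma Icc_to_range (g : ℕ → ℝ) (Q : ℕ) :
    ∑ k ∈ Icc 1 Q, g k = ∑ j ∈ range Q, g (j + 1) := by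
  induction Q with
  | zero => simp
  | succ n ih => rw [Finset.sum_Icc_succ_top (by omega), ih, Finset.sum_range_succ]

lemma Tm_one (k : ℕ) : Tm (fun _ => 1) k = (k : ℝ) + 1 := by
  simp [Tm]

lemma U_eq (N : ℕ) : ∑ k ∈ Icc 1 N, ((k : ℝ) + 1) = ((N : ℝ) ^ 2 + 3 * N) / 2 := by
  induction N with
  | zero => simp
  | succ n ih => rw [Finset.sum_Icc_succ_top (by omega), ih]; push_cast; ring

lemma B_low {Q : ℕ} (hQ : 1 ≤ Q) :
    (Q : ℝ) ^ 2 / 8 - (3 / 2) * Q * ∑ j ∈ range Q, (1 : ℝ) / (j + 1)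
      ≤ Sm (fun _ => 1) Q := by
  have hQ0 : (0:ℝ) < Q := by exact_mod_cast hQ
  have hU : ∀ d : ℕ, (∑ k ∈ Icc 1 (Q / d), Tm (fun _ => 1) k)
      = ((Q / d : ℕ) : ℝ) ^ 2 / 2 + 3 * ((Q / d : ℕ) : ℝ) / 2 := by
    intro d
    simp only [Tm_one]
    rw [U_eq]; ring
  rw [Sm_eq']
  have hsplit : Icc 1 Q = insert 1 (Icc 2 Q) := by
    ext x; simp only [Finset.mem_Icc, Finset.mem_insert]; omega
  rw [hsplit, Finset.sum_insert (by simp)]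
  have h1 : (μ 1 : ℝ) * ∑ k ∈ Icc 1 (Q / 1), Tm (fun _ => 1) k
      = ((Q:ℝ) ^ 2 + 3 * Q) / 2 := by
    simp only [moebius_apply_one, Nat.div_one, Tm_one]
    rw [U_eq]; push_cast; ring
  rw [h1]
  have hrest : |∑ d ∈ Icc 2 Q, (μ d : ℝ) * ∑ k ∈ Icc 1 (Q / d), Tm (fun _ => 1) k|
      ≤ 3 / 8 * (Q:ℝ) ^ 2 + (3 / 2) * Q * ∑ d ∈ Icc 2 Q, (1:ℝ) / d := by
    calc |∑ d ∈ Icc 2 Q, (μ d : ℝ) * ∑ k ∈ Icc 1 (Q / d), Tm (fun _ => 1) k|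
        ≤ ∑ d ∈ Icc 2 Q, |(μ d : ℝ) * ∑ k ∈ Icc 1 (Q / d), Tm (fun _ => 1) k| :=
          Finset.abs_sum_le_sum_abs _ _
      _ ≤ ∑ d ∈ Icc 2 Q, ((Q:ℝ) ^ 2 / 2 * ((1:ℝ) / (d:ℝ) ^ 2) + (3 / 2) * Q * ((1:ℝ) / d)) := by
          refine Finset.sum_le_sum fun d hd => ?_
          rw [Finset.mem_Icc] at hd
          have hd0 : (0:ℝ) < d := by exact_mod_cast (by omega : 0 < d)
          have hmu : |(μ d : ℝ)| ≤ 1 := by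
            rcases moebius_eq_or d with h | h | h <;> simp [h]
          have hcast : ((Q / d : ℕ) : ℝ) ≤ (Q : ℝ) / d := Nat.cast_div_le
          have hcast0 : (0:ℝ) ≤ ((Q / d : ℕ) : ℝ) := by positivity
          rw [abs_mul, hU d]
          have habs : |((Q / d : ℕ) : ℝ) ^ 2 / 2 + 3 * ((Q / d : ℕ) : ℝ) / 2|
              = ((Q / d : ℕ) : ℝ) ^ 2 / 2 + 3 * ((Q / d : ℕ) : ℝ) / 2 := by
            rw [abs_of_nonneg]; positivity
          rw [habs]
          have hsq : ((Q / d : ℕ) : ℝ) ^ 2 ≤ ((Q:ℝ) / d) ^ 2 := by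
            apply pow_le_pow_left₀ hcast0 hcast
          have e1 : ((Q:ℝ) / d) ^ 2 = (Q:ℝ)^2 * ((1:ℝ)/(d:ℝ)^2) := by
            field_simp
          have hX : |(μ d : ℝ)| * (((Q / d : ℕ) : ℝ) ^ 2 / 2 + 3 * ((Q / d : ℕ) : ℝ) / 2)
              ≤ ((Q / d : ℕ) : ℝ) ^ 2 / 2 + 3 * ((Q / d : ℕ) : ℝ) / 2 :=
            mul_le_of_le_one_left (by positivity) hmu
          have e2 : (Q:ℝ) / d = (Q:ℝ) * (1 / d) := by ring
          nlinarith
      _ ≤ 3 / 8 * (Q:ℝ) ^ 2 + (3 / 2) * Q * ∑ d ∈ Icc 2 Q, (1:ℝ) / d := by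
          rw [Finset.sum_add_distrib, ← Finset.mul_sum, ← Finset.mul_sum]
          have := sq_sum Q
          nlinarith [sq_nonneg (Q:ℝ)]
  have hmono : ∑ d ∈ Icc 2 Q, (1:ℝ) / d ≤ ∑ j ∈ range Q, (1:ℝ) / (j + 1) := by
    have hcv : ∑ j ∈ range Q, (1:ℝ) / ((j:ℝ) + 1) = ∑ k ∈ Icc 1 Q, (1:ℝ) / (k:ℝ) := by
      rw [Icc_to_range (fun k => (1:ℝ)/(k:ℝ)) Q]
      push_cast
      rfl
    rw [hcv]
    apply Finset.sum_le_sum_of_subset_of_nonneg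
    · apply Finset.Icc_subset_Icc_left; omega
    · intro i _ _; positivity
  have := abs_le.1 hrest
  have h2 : (3 / 2) * (Q:ℝ) * ∑ d ∈ Icc 2 Q, (1:ℝ) / d
      ≤ (3 / 2) * Q * ∑ j ∈ range Q, (1:ℝ) / (j + 1) := by
    apply mul_le_mul_of_nonneg_left hmono (by positivity)
  nlinarith [sq_nonneg (Q:ℝ)]

noncomputable def del (f : ℝ → ℝ) (I : ℝ) (j : ℕ) : ℝ :=
  |Tm f (j + 1) - (((j + 1 : ℕ) : ℝ) + 1) * I| / ((j + 1 : ℕ) : ℝ)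

lemma del_nonneg (f : ℝ → ℝ) (I : ℝ) (j : ℕ) : 0 ≤ del f I j := by
  unfold del; positivity

lemma del_tendsto (f : ℝ → ℝ) (hf : ContinuousOn f (Set.Icc 0 1)) :
    Tendsto (del f (∫ x in (0:ℝ)..1, f x)) atTop (𝓝 0) := by
  set I := ∫ x in (0:ℝ)..1, f x with hI
  have h1 : Tendsto (fun k : ℕ => Tm f k / k - ((k : ℝ) + 1) * I / k) atTop (𝓝 0) := by
    have h2 : Tendsto (fun k : ℕ => ((k : ℝ) + 1) * I / k) atTop (𝓝 I) := by
      have h3 : Tendsto (fun k : ℕ => I + I / k) atTop (𝓝 (I + 0)) :=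
        tendsto_const_nhds.add (tendsto_const_div_atTop_nhds_zero_nat I)
      rw [add_zero] at h3
      apply h3.congr'
      filter_upwards [eventually_gt_atTop 0] with k hk
      have hk0 : (k:ℝ) ≠ 0 := by positivity
      field_simp
    have := (riemann_tendsto f hf).sub h2
    rw [sub_self] at this
    exact this
  have h4 : Tendsto (fun j : ℕ => Tm f (j+1) / (j+1) - (((j+1) : ℝ) + 1) * I / (j+1))
      atTop (𝓝 0) := by
    have := h1.comp (tendsto_add_atTop_nat 1)
    apply this.congr
    intro j
    simp only [Function.comp_apply]
    push_cast
    ring_nf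
  have h5 := h4.abs
  rw [abs_zero] at h5
  apply h5.congr
  intro j
  unfold del
  have hj : (0:ℝ) < ((j+1 : ℕ):ℝ) := by positivity
  rw [div_sub_div_same, abs_div]
  push_cast
  rw [abs_of_pos (by positivity : (0:ℝ) < (j:ℝ) + 1)]

lemma E_bound (f : ℝ → ℝ) (I : ℝ) (Q : ℕ) :
    |Sm f Q - I * Sm (fun _ => 1) Q| ≤ (Q : ℝ) * ∑ j ∈ range Q, del f I j := by
  rw [Sm_eq f, Sm_eq (fun _ => 1), Finset.mul_sum, ← Finset.sum_sub_distrib]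
  have key : ∀ k ∈ Icc 1 Q,
      |(∑ d ∈ Icc 1 (Q / k), (μ d : ℝ)) * Tm f k
        - I * ((∑ d ∈ Icc 1 (Q / k), (μ d : ℝ)) * Tm (fun _ => 1) k)|
      ≤ (Q : ℝ) * (|Tm f k - ((k:ℝ) + 1) * I| / k) := by
    intro k hk
    rw [Finset.mem_Icc] at hk
    have hk0 : (0:ℝ) < k := by exact_mod_cast hk.1
    rw [Tm_one]
    have e1 : (∑ d ∈ Icc 1 (Q / k), (μ d : ℝ)) * Tm f k
        - I * ((∑ d ∈ Icc 1 (Q / k), (μ d : ℝ)) * ((k:ℝ) + 1))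
        = (∑ d ∈ Icc 1 (Q / k), (μ d : ℝ)) * (Tm f k - ((k:ℝ) + 1) * I) := by ring
    rw [e1, abs_mul]
    have h2 : |∑ d ∈ Icc 1 (Q / k), (μ d : ℝ)| ≤ (Q : ℝ) / k :=
      le_trans (M_abs _) Nat.cast_div_le
    calc |∑ d ∈ Icc 1 (Q / k), (μ d : ℝ)| * |Tm f k - ((k:ℝ) + 1) * I|
        ≤ ((Q:ℝ) / k) * |Tm f k - ((k:ℝ) + 1) * I| :=
          mul_le_mul_of_nonneg_right h2 (abs_nonneg _)
      _ = (Q : ℝ) * (|Tm f k - ((k:ℝ) + 1) * I| / k) := by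
          field_simp
  calc |∑ k ∈ Icc 1 Q, ((∑ d ∈ Icc 1 (Q / k), (μ d : ℝ)) * Tm f k
        - I * ((∑ d ∈ Icc 1 (Q / k), (μ d : ℝ)) * Tm (fun _ => 1) k))|
      ≤ ∑ k ∈ Icc 1 Q, |(∑ d ∈ Icc 1 (Q / k), (μ d : ℝ)) * Tm f k
        - I * ((∑ d ∈ Icc 1 (Q / k), (μ d : ℝ)) * Tm (fun _ => 1) k)| :=
        Finset.abs_sum_le_sum_abs _ _
    _ ≤ ∑ k ∈ Icc 1 Q, (Q : ℝ) * (|Tm f k - ((k:ℝ) + 1) * I| / k) :=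
        Finset.sum_le_sum key
    _ = (Q : ℝ) * ∑ j ∈ range Q, del f I j := by
        rw [← Finset.mul_sum]
        congr 1
        rw [Icc_to_range (fun k => |Tm f k - ((k:ℝ) + 1) * I| / k) Q]
        rfl

/-- Equidistribution of Farey fractions: for the set
`F_Q = {p/q : 0 ≤ p ≤ q ≤ Q, gcd(p, q) = 1}` of Farey fractions of order `Q` and any
continuous `f : [0, 1] → ℝ`, the averages `(1/|F_Q|) Σ_{r ∈ F_Q} f(r)` converge to
`∫₀¹ f` as `Q → ∞`. -/
theorem farey_fractions_equidistribute (f : ℝ → ℝ)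
    (hf : ContinuousOn f (Set.Icc 0 1)) :
    Tendsto
      (fun Q : ℕ =>
        (∑ q ∈ Finset.Icc 1 Q, ∑ p ∈ Finset.range (q + 1),
            if Nat.gcd p q = 1 then f ((p : ℝ) / (q : ℝ)) else 0) /
        (∑ q ∈ Finset.Icc 1 Q, ∑ p ∈ Finset.range (q + 1),
            if Nat.gcd p q = 1 then (1 : ℝ) else 0))
      atTop (nhds (∫ x in (0 : ℝ)..1, f x)) := by
  set I := ∫ x in (0:ℝ)..1, f x with hIdef
  have hD : Tendsto (fun Q : ℕ => (Q:ℝ)⁻¹ • ∑ j ∈ range Q, del f I j) atTop (𝓝 0) :=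
    (del_tendsto f hf).cesaro
  have hH : Tendsto (fun Q : ℕ => (Q:ℝ)⁻¹ • ∑ j ∈ range Q, (1:ℝ) / ((j:ℝ) + 1)) atTop (𝓝 0) :=
    tendsto_one_div_add_atTop_nhds_zero_nat.cesaro
  -- eventual lower bound on the denominator
  have hB : ∀ᶠ Q : ℕ in atTop, (Q:ℝ) ^ 2 / 16 ≤ Sm (fun _ => 1) Q := by
    filter_upwards [hH.eventually_le_const (by norm_num : (0:ℝ) < 1/24),
      eventually_ge_atTop 1] with Q h24 hQ1
    have hQ0 : (0:ℝ) < Q := by exact_mod_cast hQ1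
    have hlow := B_low hQ1
    set H := ∑ j ∈ range Q, (1:ℝ) / ((j:ℝ) + 1) with hHdef
    rw [smul_eq_mul] at h24
    have hid : (Q:ℝ) * ((Q:ℝ)⁻¹ * H) = H := by field_simp
    have hH' : H ≤ (Q:ℝ) / 24 := by
      have := mul_le_mul_of_nonneg_left h24 hQ0.le
      rw [hid] at this
      linarith
    nlinarith
  -- the error term is o(Q^2)
  have hE : Tendsto (fun Q : ℕ => (Sm f Q - I * Sm (fun _ => 1) Q) / (Q:ℝ) ^ 2)
      atTop (𝓝 0) := by
    apply squeeze_zero_norm' ?_ hD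
    filter_upwards [eventually_ge_atTop 1] with Q hQ1
    have hQ0 : (0:ℝ) < Q := by exact_mod_cast hQ1
    have hDnn : 0 ≤ ∑ j ∈ range Q, del f I j :=
      Finset.sum_nonneg fun j _ => del_nonneg f I j
    rw [Real.norm_eq_abs, abs_div, abs_of_pos (by positivity : (0:ℝ) < (Q:ℝ)^2), smul_eq_mul]
    calc |Sm f Q - I * Sm (fun _ => 1) Q| / (Q:ℝ)^2
        ≤ ((Q:ℝ) * ∑ j ∈ range Q, del f I j) / (Q:ℝ)^2 := by
          gcongr
          exact E_bound f I Q
      _ = (Q:ℝ)⁻¹ * ∑ j ∈ range Q, del f I j := by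
          field_simp
  -- error over denominator tends to 0
  have hEB : Tendsto (fun Q : ℕ => (Sm f Q - I * Sm (fun _ => 1) Q) / Sm (fun _ => 1) Q)
      atTop (𝓝 0) := by
    have hg : Tendsto (fun Q : ℕ => 16 * |(Sm f Q - I * Sm (fun _ => 1) Q) / (Q:ℝ) ^ 2|)
        atTop (𝓝 0) := by
      have := (hE.abs).const_mul (16:ℝ)
      simpa using this
    apply squeeze_zero_norm' ?_ hg
    filter_upwards [hB, eventually_ge_atTop 1] with Q hBQ hQ1
    have hQ0 : (0:ℝ) < Q := by exact_mod_cast hQ1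
    have hB0 : (0:ℝ) < Sm (fun _ => 1) Q := lt_of_lt_of_le (by positivity) hBQ
    rw [Real.norm_eq_abs, abs_div, abs_of_pos hB0, abs_div,
      abs_of_pos (by positivity : (0:ℝ) < (Q:ℝ)^2)]
    calc |Sm f Q - I * Sm (fun _ => 1) Q| / Sm (fun _ => 1) Q
        ≤ |Sm f Q - I * Sm (fun _ => 1) Q| / ((Q:ℝ)^2 / 16) := by
          gcongr
      _ = 16 * (|Sm f Q - I * Sm (fun _ => 1) Q| / (Q:ℝ)^2) := by
          field_simp
  have hfinal : Tendsto
      (fun Q : ℕ => I + (Sm f Q - I * Sm (fun _ => 1) Q) / Sm (fun _ => 1) Q)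
      atTop (𝓝 (I + 0)) := tendsto_const_nhds.add hEB
  rw [add_zero] at hfinal
  apply hfinal.congr'
  filter_upwards [hB, eventually_ge_atTop 1] with Q hBQ hQ1
  have hQ0 : (0:ℝ) < Q := by exact_mod_cast hQ1
  have hB0 : (0:ℝ) < Sm (fun _ => 1) Q := lt_of_lt_of_le (by positivity) hBQ
  show I + (Sm f Q - I * Sm (fun _ => 1) Q) / Sm (fun _ => 1) Q
      = Sm f Q / Sm (fun _ => 1) Q
  field_simp
  ring
end
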